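/- arXiv:0809.3656 — 2 statements merged into one kernel-verified Lean document; each statement's English description precedes it below -/
import Mathlib

section
/- Let n ≥ 1 be an integer and p a prime number with p ≡ 1 (mod n). Then the polynomial Q(S) = Sⁿ − (pⁿ + T) is irreducible over the fraction field Frac(ℤ_p[[T]]) of the ring of formal power series over the p-adic integers. -/
open PowerSeries IsUltrametricDist

namespace PowSubAux

variable {p : ℕ} [Fact p.Prime]

/-- evaluation of a power series at `t` -/
noncomputable def phi (t : ℤ_[p]) (f : ℤ_[p]⟦X⟧) : ℤ_[p] :=
  ∑' k, coeff k f * t ^ k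

variable {t : ℤ_[p]}

lemma sum_norm (ht : ‖t‖ < 1) (c : ℕ → ℤ_[p]) : Summable fun k => ‖c k * t ^ k‖ := by
  refine Summable.of_nonneg_of_le (fun k => norm_nonneg _) (fun k => ?_)
    (summable_geometric_of_lt_one (norm_nonneg t) ht)
  rw [norm_mul, norm_pow]
  exact mul_le_of_le_one_left (pow_nonneg (norm_nonneg t) k) (PadicInt.norm_le_one _)

lemma sum1 (ht : ‖t‖ < 1) (c : ℕ → ℤ_[p]) : Summable fun k => c k * t ^ k :=
  Summable.of_norm (sum_norm ht c)

lemma phi_mul (ht : ‖t‖ < 1) (x y : ℤ_[p]⟦X⟧) : phi t (x * y) = phi t x * phi t y := by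
  rw [phi, phi, phi,
    tsum_mul_tsum_eq_tsum_sum_antidiagonal_of_summable_norm (sum_norm ht _) (sum_norm ht _)]
  refine tsum_congr fun n => ?_
  rw [PowerSeries.coeff_mul, Finset.sum_mul]
  refine Finset.sum_congr rfl fun kl hkl => ?_
  rw [Finset.HasAntidiagonal.mem_antidiagonal] at hkl
  rw [← hkl, pow_add]; ring

lemma phi_a (ht : ‖t‖ < 1) : phi t (X - C t) = 0 := by
  rw [phi, tsum_eq_sum (s := ({0, 1} : Finset ℕ)) (fun b hb => ?_)]
  · simp [PowerSeries.coeff_X, PowerSeries.coeff_C]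
  · simp only [Finset.mem_insert, Finset.mem_singleton, not_or] at hb
    simp [PowerSeries.coeff_X, PowerSeries.coeff_C, hb.1, hb.2]

lemma dvd_of_phi_eq_zero (ht : ‖t‖ < 1) {f : ℤ_[p]⟦X⟧} (hf : phi t f = 0) : (X - C t) ∣ f := by
  refine ⟨PowerSeries.mk fun k => ∑' j, coeff (j + (k + 1)) f * t ^ j, ?_⟩
  ext k
  rw [sub_mul]
  cases k with
  | zero =>
    rw [map_sub, PowerSeries.coeff_zero_X_mul, PowerSeries.coeff_C_mul, PowerSeries.coeff_mk]
    have h0 := Summable.tsum_eq_zero_add (sum1 ht (fun k => coeff k f))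
    rw [phi] at hf
    rw [hf] at h0
    have h1 : t * ∑' j, coeff (j + 1) f * t ^ j
        = ∑' j, coeff (j + 1) f * t ^ (j + 1) := by
      rw [← (sum1 ht (fun k => coeff (k + 1) f)).tsum_mul_left t]
      exact tsum_congr fun j => by ring
    simp only [zero_add] at h1 ⊢
    rw [h1]
    rw [pow_zero, mul_one] at h0
    linear_combination -h0
  | succ m =>
    rw [map_sub, PowerSeries.coeff_succ_X_mul, PowerSeries.coeff_C_mul, PowerSeries.coeff_mk,
      PowerSeries.coeff_mk]
    have h0 := Summable.tsum_eq_zero_add (sum1 ht (fun k => coeff (k + (m + 1)) f))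
    have h1 : t * ∑' j, coeff (j + (m + 2)) f * t ^ j
        = ∑' j, coeff (j + 1 + (m + 1)) f * t ^ (j + 1) := by
      rw [← (sum1 ht (fun k => coeff (k + (m + 2)) f)).tsum_mul_left t]
      refine tsum_congr fun j => ?_
      rw [show j + 1 + (m + 1) = j + (m + 2) by omega]
      ring
    rw [h1, h0]
    simp only [zero_add, pow_zero, mul_one]
    ring

lemma prime_a (ht : ‖t‖ < 1) : Prime (X - C t) := by
  constructor
  · intro h
    have := congrArg (coeff 1) h
    simp [PowerSeries.coeff_X, PowerSeries.coeff_C] at this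
  constructor
  · rw [PowerSeries.isUnit_iff_constantCoeff]
    rw [map_sub, PowerSeries.constantCoeff_X, PowerSeries.constantCoeff_C, zero_sub]
    rw [IsUnit.neg_iff, PadicInt.isUnit_iff]
    exact ne_of_lt ht
  · intro x y ⟨c, hc⟩
    have : phi t x * phi t y = 0 := by
      rw [← phi_mul ht, hc, phi_mul ht, phi_a ht, zero_mul]
    rcases mul_eq_zero.mp this with h | h
    · exact Or.inl (dvd_of_phi_eq_zero ht h)
    · exact Or.inr (dvd_of_phi_eq_zero ht h)

lemma coeff_pow_a_le (ht : ‖t‖ < 1) (k i : ℕ) : ‖coeff i ((X - C t) ^ k)‖ ≤ ‖t‖ ^ (k - i) := by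
  induction k generalizing i with
  | zero =>
    simp only [pow_zero, Nat.zero_sub, pow_zero]
    exact (PadicInt.norm_le_one _)
  | succ k IH =>
    rw [pow_succ, mul_comm, sub_mul]
    cases i with
    | zero =>
      rw [map_sub, PowerSeries.coeff_zero_X_mul, PowerSeries.coeff_C_mul, zero_sub, norm_neg,
        norm_mul]
      calc ‖t‖ * ‖coeff 0 ((X - C t) ^ k)‖ ≤ ‖t‖ * ‖t‖ ^ (k - 0) :=
            mul_le_mul_of_nonneg_left (IH 0) (norm_nonneg t)
        _ = ‖t‖ ^ (k + 1 - 0) := by rw [Nat.sub_zero, Nat.sub_zero, ← pow_succ']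
    | succ m =>
      rw [map_sub, PowerSeries.coeff_succ_X_mul, PowerSeries.coeff_C_mul, sub_eq_add_neg]
      refine (PadicInt.nonarchimedean _ _).trans (max_le ?_ ?_)
      · exact (IH m).trans (pow_le_pow_of_le_one (norm_nonneg t) ht.le (by omega))
      · rw [norm_neg, norm_mul]
        calc ‖t‖ * ‖coeff (m + 1) ((X - C t) ^ k)‖
            ≤ ‖t‖ * ‖t‖ ^ (k - (m + 1)) := mul_le_mul_of_nonneg_left (IH (m + 1)) (norm_nonneg t)
          _ = ‖t‖ ^ (1 + (k - (m + 1))) := by rw [pow_add, pow_one]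
          _ ≤ ‖t‖ ^ (k + 1 - (m + 1)) :=
            pow_le_pow_of_le_one (norm_nonneg t) ht.le (by omega)

lemma exists_bound (ht : ‖t‖ < 1) {r : ℤ_[p]⟦X⟧} (hr : r ≠ 0) :
    ∃ K, ∀ k, (X - C t) ^ k ∣ r → k ≤ K := by
  have : ∃ j, coeff j r ≠ 0 := by
    by_contra h
    push_neg at h
    exact hr (PowerSeries.ext fun j => by rw [h j, map_zero])
  obtain ⟨j, hj⟩ := this
  have hrj : 0 < ‖coeff j r‖ := norm_pos_iff.mpr hj
  obtain ⟨m, hm⟩ := exists_pow_lt_of_lt_one hrj ht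
  refine ⟨j + m, fun k hk => ?_⟩
  by_contra hgt
  push_neg at hgt
  obtain ⟨g, hg⟩ := hk
  have hb : ‖coeff j r‖ ≤ ‖t‖ ^ (k - j) := by
    rw [hg, PowerSeries.coeff_mul]
    refine norm_sum_le_of_forall_le_of_nonneg (pow_nonneg (norm_nonneg t) _) fun kl hkl => ?_
    rw [Finset.HasAntidiagonal.mem_antidiagonal] at hkl
    rw [norm_mul]
    calc ‖coeff kl.1 ((X - C t) ^ k)‖ * ‖coeff kl.2 g‖
        ≤ ‖t‖ ^ (k - kl.1) * 1 :=
          mul_le_mul (coeff_pow_a_le ht k kl.1) (PadicInt.norm_le_one _) (norm_nonneg _)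
            (pow_nonneg (norm_nonneg t) _)
      _ = ‖t‖ ^ (k - kl.1) := mul_one _
      _ ≤ ‖t‖ ^ (k - j) := pow_le_pow_of_le_one (norm_nonneg t) ht.le (by omega)
  have : ‖t‖ ^ (k - j) ≤ ‖t‖ ^ m := pow_le_pow_of_le_one (norm_nonneg t) ht.le (by omega)
  linarith

variable {t : ℤ_[p]}

/-- the prime ideal generated by `X - C t` -/
noncomputable def Pt (t : ℤ_[p]) : Ideal ℤ_[p]⟦X⟧ := Ideal.span {X - C t}

lemma Pt_isPrime (ht : ‖t‖ < 1) : (Pt t).IsPrime :=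
  (Ideal.span_singleton_prime (prime_a ht).ne_zero).mpr (prime_a ht)

section Loc

variable [hP : (Pt t).IsPrime]

lemma inj_loc : Function.Injective (algebraMap ℤ_[p]⟦X⟧ (Localization.AtPrime (Pt t))) := by
  refine IsLocalization.injective (M := (Pt t).primeCompl) (Localization.AtPrime (Pt t)) ?_
  intro x hx
  refine mem_nonZeroDivisors_of_ne_zero ?_
  rintro rfl
  exact absurd (Pt t).zero_mem hx

lemma abar_ne_zero (ht : ‖t‖ < 1) :
    algebraMap ℤ_[p]⟦X⟧ (Localization.AtPrime (Pt t)) (X - C t) ≠ 0 := fun h =>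
  (prime_a ht).ne_zero (inj_loc (h.trans (map_zero _).symm))

lemma max_loc : IsLocalRing.maximalIdeal (Localization.AtPrime (Pt t))
    = Ideal.span {algebraMap ℤ_[p]⟦X⟧ (Localization.AtPrime (Pt t)) (X - C t)} := by
  refine (Localization.AtPrime.map_eq_maximalIdeal).symm.trans ?_
  show Ideal.map _ (Ideal.span {X - C t}) = _
  rw [Ideal.map_span, Set.image_singleton]

lemma irr_abar (ht : ‖t‖ < 1) :
    Irreducible (algebraMap ℤ_[p]⟦X⟧ (Localization.AtPrime (Pt t)) (X - C t)) :=
  IsDiscreteValuationRing.irreducible_of_span_eq_maximalIdeal _ (abar_ne_zero ht) max_loc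

lemma dvr_loc (ht : ‖t‖ < 1) : IsDiscreteValuationRing (Localization.AtPrime (Pt t)) := by
  classical
  apply IsDiscreteValuationRing.ofHasUnitMulPowIrreducibleFactorization
  refine ⟨algebraMap ℤ_[p]⟦X⟧ (Localization.AtPrime (Pt t)) (X - C t), irr_abar ht, ?_⟩
  intro x hx
  obtain ⟨⟨r, s⟩, hrs : IsLocalization.mk' (Localization.AtPrime (Pt t)) r s = x⟩ := IsLocalization.mk'_surjective (Pt t).primeCompl x
  have hr0 : r ≠ 0 := by
    rintro rfl
    apply hx
    rw [← hrs, IsLocalization.mk'_zero]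
  obtain ⟨K0, hK0⟩ := exists_bound ht hr0
  have hex : ∃ k, ¬ (X - C t) ^ k ∣ r := ⟨K0 + 1, fun h => by have := hK0 _ h; omega⟩
  have hkpos : Nat.find hex ≠ 0 := by
    intro h
    have := Nat.find_spec hex
    rw [h, pow_zero] at this
    exact this (one_dvd r)
  obtain ⟨y, hy⟩ : (X - C t) ^ (Nat.find hex - 1) ∣ r :=
    not_not.mp (Nat.find_min hex (by omega))
  obtain ⟨N, hN⟩ : ∃ N, Nat.find hex = N := ⟨_, rfl⟩
  have hay : ¬ (X - C t) ∣ y := by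
    rintro ⟨z, hz⟩
    refine Nat.find_spec hex ⟨z, ?_⟩
    rw [hN] at hkpos ⊢
    rw [hN] at hy
    obtain ⟨m, rfl⟩ : ∃ m, N = m + 1 := ⟨N - 1, by omega⟩
    rw [hy, hz]
    simp only [Nat.add_sub_cancel]
    ring
  have hyunit : IsUnit (algebraMap ℤ_[p]⟦X⟧ (Localization.AtPrime (Pt t)) y) := by
    rw [IsLocalization.AtPrime.isUnit_to_map_iff (Localization.AtPrime (Pt t)) (Pt t) y]
    exact fun hmem => hay (Ideal.mem_span_singleton.mp hmem)
  refine ⟨Nat.find hex - 1, ?_⟩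
  have h1 : Associated ((algebraMap ℤ_[p]⟦X⟧ (Localization.AtPrime (Pt t))
        (X - C t)) ^ (Nat.find hex - 1))
      (algebraMap ℤ_[p]⟦X⟧ (Localization.AtPrime (Pt t)) r) :=
    ⟨hyunit.unit, by rw [← map_pow, IsUnit.unit_spec, ← map_mul, ← hy]⟩
  have h2 : Associated (algebraMap ℤ_[p]⟦X⟧ (Localization.AtPrime (Pt t)) r) x := by
    have hs : IsUnit (algebraMap ℤ_[p]⟦X⟧ (Localization.AtPrime (Pt t)) s) :=
      IsLocalization.map_units _ s
    refine ⟨hs.unit⁻¹, ?_⟩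
    rw [← hrs, ← IsLocalization.mk'_spec (Localization.AtPrime (Pt t)) r s, mul_assoc]
    simp
  exact h1.trans h2

lemma irr_fA (ht : ‖t‖ < 1) (n : ℕ) (hn : 1 ≤ n) :
    Irreducible (Polynomial.X ^ n - Polynomial.C
      (algebraMap ℤ_[p]⟦X⟧ (Localization.AtPrime (Pt t)) (X - C t))) := by
  set abar := algebraMap ℤ_[p]⟦X⟧ (Localization.AtPrime (Pt t)) (X - C t) with habar
  have hmonic : (Polynomial.X ^ n - Polynomial.C abar).Monic :=
    Polynomial.monic_X_pow_sub_C abar (by omega)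
  have hdeg : (Polynomial.X ^ n - Polynomial.C abar).natDegree = n :=
    Polynomial.natDegree_X_pow_sub_C
  have hm : (IsLocalRing.maximalIdeal (Localization.AtPrime (Pt t))).IsMaximal :=
    IsLocalRing.maximalIdeal.isMaximal _
  have hirr := irr_abar (t := t) ht
  have habar0 := abar_ne_zero (t := t) ht
  have hEis : (Polynomial.X ^ n - Polynomial.C abar).IsEisensteinAt
      (IsLocalRing.maximalIdeal (Localization.AtPrime (Pt t))) := by
    constructor
    · rw [hmonic.leadingCoeff]
      exact (Ideal.ne_top_iff_one _).mp hm.ne_top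
    · intro i hi
      rw [hdeg] at hi
      rw [Polynomial.coeff_sub, Polynomial.coeff_X_pow, Polynomial.coeff_C,
        if_neg (by omega : ¬ i = n), zero_sub, max_loc]
      refine neg_mem ?_
      split
      · exact Ideal.subset_span rfl
      · exact Ideal.zero_mem _
    · rw [Polynomial.coeff_sub, Polynomial.coeff_X_pow, Polynomial.coeff_C,
        if_neg (by omega : ¬ 0 = n), if_pos rfl, zero_sub, max_loc,
        Ideal.span_singleton_pow, Ideal.mem_span_singleton]
      intro hdvd
      obtain ⟨c, hc⟩ := (dvd_neg (α := Localization.AtPrime (Pt t))).mp hdvd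
      apply hirr.not_isUnit
      have h2 : abar * 1 = abar * (abar * c) := by
        rw [mul_one, ← mul_assoc, ← sq, ← hc]
      exact IsUnit.of_mul_eq_one _ (mul_left_cancel₀ habar0 h2).symm
  exact hEis.irreducible hm.isPrime hmonic.isPrimitive (by rw [hdeg]; omega)

end Loc

end PowSubAux

set_option maxHeartbeats 1000000 in
/-- If `n ≥ 1` and `p` is a prime with `p ≡ 1 (mod n)`, the polynomial `Sⁿ − (pⁿ + T)` is
irreducible over the fraction field `Frac(ℤ_p[[T]])` of the ring of formal power series over
the `p`-adic integers. -/
theorem pow_sub_p_pow_add_X_irreducible (n : ℕ) (hn : 1 ≤ n) (p : ℕ) [Fact p.Prime]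
    (hp : p ≡ 1 [MOD n]) :
    Irreducible
      (Polynomial.X ^ n -
        Polynomial.C (algebraMap (PowerSeries ℤ_[p]) (FractionRing (PowerSeries ℤ_[p]))
          ((p : PowerSeries ℤ_[p]) ^ n + PowerSeries.X))) := by
  have hppos : 1 < (p : ℝ) := by
    exact_mod_cast (Fact.out : p.Prime).one_lt
  set t : ℤ_[p] := -((p : ℤ_[p]) ^ n) with ht_def
  have ht : ‖t‖ < 1 := by
    rw [ht_def, norm_neg, norm_pow, PadicInt.norm_p]
    exact pow_lt_one₀ (by positivity) (inv_lt_one_of_one_lt₀ hppos) (by omega)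
  have hkey : (p : PowerSeries ℤ_[p]) ^ n + PowerSeries.X
      = PowerSeries.X - PowerSeries.C t := by
    have h1 : (p : PowerSeries ℤ_[p]) = PowerSeries.C (p : ℤ_[p]) :=
      (map_natCast (PowerSeries.C) p).symm
    rw [ht_def, map_neg, sub_neg_eq_add, h1, ← map_pow, add_comm]
  rw [hkey]
  haveI hP : (PowSubAux.Pt t).IsPrime := PowSubAux.Pt_isPrime ht
  haveI hDVR : IsDiscreteValuationRing (Localization.AtPrime (PowSubAux.Pt t)) := PowSubAux.dvr_loc ht
  haveI hufd : UniqueFactorizationMonoid (Localization.AtPrime (PowSubAux.Pt t)) :=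
    PrincipalIdealRing.to_uniqueFactorizationMonoid
  haveI : IsIntegrallyClosed (Localization.AtPrime (PowSubAux.Pt t)) :=
    UniqueFactorizationMonoid.instIsIntegrallyClosed
  have hmonic : (Polynomial.X ^ n - Polynomial.C (algebraMap ℤ_[p]⟦X⟧
      (Localization.AtPrime (PowSubAux.Pt t)) (PowerSeries.X - PowerSeries.C t))).Monic :=
    Polynomial.monic_X_pow_sub_C _ (by omega)
  have hfinal := (hmonic.irreducible_iff_irreducible_map_fraction_map
    (K := FractionRing (PowerSeries ℤ_[p]))).mp (PowSubAux.irr_fA ht n hn)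
  rwa [Polynomial.map_sub, Polynomial.map_pow, Polynomial.map_X, Polynomial.map_C,
    ← IsScalarTower.algebraMap_apply] at hfinal
end

section
/- Let K be a number field with ring of integers A and let r > 1 be a real number. If f = ∑_{n≥0} a_n Tⁿ ∈ A[[T]] is a power series such that for every ring embedding σ : K → ℂ the complex power series ∑_{n≥0} σ(a_n) Tⁿ has radius of convergence at least r (equivalently, for every s ∈ [0,r), |σ(a_n)| sⁿ → 0 as n → ∞), then f is a polynomial: a_n = 0 for all sufficiently large n. In other words, A_{r⁻}[[T]] = A[T] for every r > 1. -/
open Filter NumberField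

/-- An algebraic integer all of whose infinite places are `< 1` is zero. -/
lemma aux_eq_zero_of_all_places_lt_one {K : Type} [Field K] [NumberField K] (a : 𝓞 K)
    (h : ∀ σ : K →+* ℂ, ‖σ (algebraMap (𝓞 K) K a)‖ < 1) : a = 0 := by
  by_contra ha
  obtain ⟨w⟩ : Nonempty (InfinitePlace K) := inferInstance
  have h1 : ∀ ⦃z : InfinitePlace K⦄, z ≠ w → z (algebraMap (𝓞 K) K a) < 1 := by
    intro z _
    rw [← z.norm_embedding_eq]
    exact h z.embedding
  have := NumberField.InfinitePlace.one_le_of_lt_one (w := w) ha h1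
  rw [← w.norm_embedding_eq] at this
  exact absurd (h w.embedding) (not_lt.mpr this)

/-- Let `K` be a number field with ring of integers `A` and `r > 1` a real number. Any power
series `f ∈ A[[T]]` such that, for every embedding `σ : K → ℂ`, the complex series `σ(f)` has
radius of convergence at least `r` (i.e. `|σ(aₙ)| sⁿ → 0` for all `0 ≤ s < r`) is a
polynomial: its coefficients vanish for all sufficiently large `n`. -/
theorem powerSeries_radius_gt_one_is_polynomial (K : Type) [Field K] [NumberField K]
    (r : ℝ) (hr : 1 < r) (f : PowerSeries (𝓞 K))
    (hf : ∀ σ : K →+* ℂ, ∀ s : ℝ, 0 ≤ s → s < r →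
      Tendsto (fun n : ℕ =>
        ‖σ (algebraMap (𝓞 K) K (PowerSeries.coeff n f))‖ * s ^ n)
        atTop (nhds 0)) :
    ∃ N : ℕ, ∀ n : ℕ, N ≤ n → PowerSeries.coeff n f = 0 := by
  set s : ℝ := (1 + r) / 2 with hs
  have hs1 : 1 < s := by rw [hs]; linarith
  have hs0 : (0 : ℝ) ≤ s := by linarith
  have hsr : s < r := by rw [hs]; linarith
  have key : ∀ᶠ n in atTop, ∀ σ : K →+* ℂ,
      ‖σ (algebraMap (𝓞 K) K (PowerSeries.coeff n f))‖ < 1 := by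
    rw [eventually_all]
    intro σ
    have h := (hf σ s hs0 hsr).eventually (eventually_lt_nhds one_pos)
    filter_upwards [h] with n hn
    have hpow : (1 : ℝ) ≤ s ^ n := one_le_pow₀ hs1.le
    have habs : (0 : ℝ) ≤ ‖σ (algebraMap (𝓞 K) K (PowerSeries.coeff n f))‖ :=
      norm_nonneg _
    nlinarith
  obtain ⟨N, hN⟩ := key.exists_forall_of_atTop
  exact ⟨N, fun n hn => aux_eq_zero_of_all_places_lt_one _ (hN n hn)⟩
end
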